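/- Let μ > 1, λ₁,…,λ_N > 0 with Σⱼλⱼ = 1, k_i = (μΣ_{j≤i}λⱼ + Σ_{j>i}λⱼ)/((μ−1)λ_i). Suppose real numbers x_j, c_j and y_j, d_j satisfy x_i = c₁+…+c_{i−1}+k_i c_i, y_i = d₁+…+d_{i−1}+k_i d_i for all i, with Σⱼ cⱼ = Σⱼ dⱼ = 0. Then Σⱼ λⱼ xⱼ yⱼ = Σⱼ kⱼ(kⱼ−1) λⱼ cⱼ dⱼ. -/

import Mathlib

open Finset

lemma tele_aux (g : ℕ → ℝ) (N : ℕ) :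
    ∑ i ∈ Finset.Icc 1 N, (g (i + 1) - g i) = g (N + 1) - g 1 := by
  induction N with
  | zero => simp
  | succ n ih =>
    rw [Finset.sum_Icc_succ_top (by omega), ih]
    ring

theorem stmt9 (N : ℕ) (μ : ℝ) (hμ : 1 < μ)
    (l : ℕ → ℝ) (hl : ∀ j ∈ Finset.Icc 1 N, 0 < l j)
    (hsum : ∑ j ∈ Finset.Icc 1 N, l j = 1)
    (k : ℕ → ℝ)
    (hk : ∀ i ∈ Finset.Icc 1 N,
      k i = (μ * ∑ j ∈ Finset.Icc 1 i, l j + ∑ j ∈ Finset.Ioc i N, l j) /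
        ((μ - 1) * l i))
    (x c y d : ℕ → ℝ)
    (hx : ∀ i ∈ Finset.Icc 1 N,
      x i = (∑ j ∈ Finset.Ico 1 i, c j) + k i * c i)
    (hy : ∀ i ∈ Finset.Icc 1 N,
      y i = (∑ j ∈ Finset.Ico 1 i, d j) + k i * d i)
    (hc : ∑ j ∈ Finset.Icc 1 N, c j = 0)
    (hd : ∑ j ∈ Finset.Icc 1 N, d j = 0) :
    ∑ j ∈ Finset.Icc 1 N, l j * x j * y j =
      ∑ j ∈ Finset.Icc 1 N, k j * (k j - 1) * l j * c j * d j := by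
  have hμ1 : μ - 1 ≠ 0 := by linarith
  set a : ℝ := 1 / (μ - 1) with ha
  set S : ℕ → ℝ := fun i => ∑ j ∈ Finset.Icc 1 i, l j with hS
  set C : ℕ → ℝ := fun i => ∑ j ∈ Finset.Ico 1 i, c j with hC
  set D : ℕ → ℝ := fun i => ∑ j ∈ Finset.Ico 1 i, d j with hD
  -- key: l i * k i = a + S i
  have hlk : ∀ i ∈ Finset.Icc 1 N, l i * k i = a + S i := by
    intro i hi
    obtain ⟨h1, h2⟩ := Finset.mem_Icc.mp hi
    have hli : l i ≠ 0 := ne_of_gt (hl i hi)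
    have hsplit : S i + ∑ j ∈ Finset.Ioc i N, l j = 1 := by
      have h0 : ∀ m : ℕ, Finset.Icc 1 m = Finset.Ioc 0 m := fun m => Finset.Icc_add_one_left_eq_Ioc 0 m
      rw [hS]
      simp only [h0]
      rw [Finset.sum_Ioc_consecutive _ (Nat.zero_le i) h2]
      rw [h0] at hsum
      exact hsum
    have hIoc : ∑ j ∈ Finset.Ioc i N, l j = 1 - S i := by linarith
    rw [hk i hi, hIoc, ha]
    field_simp
    ring
  have hSrec : ∀ i ∈ Finset.Icc 1 N, S i = S (i - 1) + l i := by
    intro i hi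
    obtain ⟨h1, _⟩ := Finset.mem_Icc.mp hi
    obtain ⟨m, rfl⟩ : ∃ m, i = m + 1 := ⟨i - 1, by omega⟩
    rw [hS]
    simp only [Nat.add_sub_cancel]
    exact Finset.sum_Icc_succ_top (by omega) _
  have hCrec : ∀ i : ℕ, 1 ≤ i → C (i + 1) = C i + c i := by
    intro i hi
    rw [hC]
    exact Finset.sum_Ico_succ_top hi _
  have hDrec : ∀ i : ℕ, 1 ≤ i → D (i + 1) = D i + d i := by
    intro i hi
    rw [hD]
    exact Finset.sum_Ico_succ_top hi _
  -- pointwise identity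
  have hpt : ∀ i ∈ Finset.Icc 1 N,
      l i * x i * y i - k i * (k i - 1) * l i * c i * d i
        = (fun n => (a + S (n - 1)) * (C n * D n)) (i + 1)
          - (fun n => (a + S (n - 1)) * (C n * D n)) i := by
    intro i hi
    obtain ⟨h1, _⟩ := Finset.mem_Icc.mp hi
    simp only
    rw [hx i hi, hy i hi]
    have e1 := hlk i hi
    have e2 := hSrec i hi
    have e3 := hCrec i h1
    have e4 := hDrec i h1
    have hii : i + 1 - 1 = i := by omega
    rw [hii, e3, e4]
    show l i * (C i + k i * c i) * (D i + k i * d i)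
        - k i * (k i - 1) * l i * c i * d i
      = (a + S i) * ((C i + c i) * (D i + d i))
        - (a + S (i - 1)) * (C i * D i)
    linear_combination (C i * d i + c i * D i + c i * d i) * e1
      - (C i * D i) * e2
  have hC1 : C 1 = 0 := by simp [hC]
  have hD1 : D 1 = 0 := by simp [hD]
  have hCN : C (N + 1) = 0 := by
    rw [hC]; simp only
    rw [← Finset.Ico_add_one_right_eq_Icc] at hc
    exact hc
  have key : ∑ i ∈ Finset.Icc 1 N,
      (l i * x i * y i - k i * (k i - 1) * l i * c i * d i) = 0 := by
    rw [Finset.sum_congr rfl hpt, tele_aux (fun n => (a + S (n - 1)) * (C n * D n)) N]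
    simp only [Nat.add_sub_cancel]
    rw [hC1, hCN]
    ring
  rw [← sub_eq_zero, ← Finset.sum_sub_distrib]
  exact key
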